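/- Let G be an m-distance-regular graph. Then the collection of m-distance matrices {A_ℓ : ℓ ∈ D}, where D is the set of all m-distances realized in G, forms a symmetric association scheme: A_o = I, the matrices are symmetric, they sum to the all-ones matrix J, and products satisfy the Bose–Mesner relations A_a A_b = Σ_{ℓ∈D} p_{ab}^ℓ A_ℓ. -/
import Mathlib


open Matrix

/-- A walk in an edge-colored graph: `CWalk Γ x y cs` means there is a walk from
`x` to `y` whose successive edges have the colors listed in `cs`. -/
inductive CWalk {m : ℕ} {X : Type*} (Γ : Fin m → X → X → Prop) : X → X → List (Fin m) → Prop
  | nil (x : X) : CWalk Γ x x []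
  | cons {x y z : X} {i : Fin m} {cs : List (Fin m)} :
      Γ i x y → CWalk Γ y z cs → CWalk Γ x z (i :: cs)

/-- The `m`-length of a walk type: the vector counting edges of each color. -/
def mlen {m : ℕ} (cs : List (Fin m)) : Fin m → ℕ := fun i => cs.count i

/-- The set of `m`-lengths of walks between `x` and `y`. -/
def walkLengths {m : ℕ} {X : Type*} (Γ : Fin m → X → X → Prop) (x y : X) :
    Set (Fin m → ℕ) := {ℓ | ∃ cs, CWalk Γ x y cs ∧ mlen cs = ℓ}


/-- The `i`-th standard basis tuple `e_i` of `ℕ^m`. -/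
def eVec {m : ℕ} (i : Fin m) : Fin m → ℕ := Pi.single i 1

/-- The `ℓ`-th `m`-distance matrix of a graph with `m`-distance function `d`. -/
def mdistMatrix {m : ℕ} {X : Type*} [DecidableEq X] [Fintype X]
    (d : X → X → (Fin m → ℕ)) (ℓ : Fin m → ℕ) : Matrix X X ℝ :=
  Matrix.of fun x y => if d x y = ℓ then (1 : ℝ) else 0

lemma CWalk.append' {m : ℕ} {X : Type*} {Γ : Fin m → X → X → Prop} {x y z : X}
    {cs ds : List (Fin m)} (h1 : CWalk Γ x y cs) (h2 : CWalk Γ y z ds) :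
    CWalk Γ x z (cs ++ ds) := by
  induction h1 with
  | nil => simpa using h2
  | cons h _ ih => exact CWalk.cons h (ih h2)

lemma CWalk.reverse' {m : ℕ} {X : Type*} {Γ : Fin m → X → X → Prop}
    (hs : ∀ i (x y : X), Γ i x y → Γ i y x) {x y : X} {cs : List (Fin m)}
    (h : CWalk Γ x y cs) : CWalk Γ y x cs.reverse := by
  induction h with
  | nil => exact CWalk.nil _
  | cons h _ ih =>
      simpa using ih.append' (CWalk.cons (hs _ _ _ h) (CWalk.nil _))

/-- The `m`-distance matrices of an `m`-distance-regular graph form a symmetric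
association scheme: `A_o` is the identity, the matrices are symmetric, they sum to
the all-ones matrix, and they satisfy the Bose–Mesner relations
`A_a A_b = Σ_{ℓ ∈ D} p_{ab}^ℓ A_ℓ`. -/
theorem mdistanceRegular_assocScheme {m : ℕ} {X : Type*} [DecidableEq X] [Fintype X]
    (Γ : Fin m → X → X → Prop)
    (hsymmG : ∀ i (x y : X), Γ i x y → Γ i y x)
    (le : (Fin m → ℕ) → (Fin m → ℕ) → Prop)
    (hrefl : ∀ a, le a a)
    (hantisymm : ∀ a b, le a b → le b a → a = b)
    (htrans : ∀ a b c, le a b → le b c → le a c)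
    (htotal : ∀ a b, le a b ∨ le b a)
    (hadd : ∀ u v w : Fin m → ℕ, le u v → le (w + u) (w + v))
    (hwell : ∀ S : Set (Fin m → ℕ), S.Nonempty → ∃ a ∈ S, ∀ b ∈ S, le a b)
    (d : X → X → (Fin m → ℕ))
    (hd : ∀ x y, d x y ∈ walkLengths Γ x y ∧ ∀ ℓ ∈ walkLengths Γ x y, le (d x y) ℓ)
    (hE : ∀ i : Fin m, ∃ x y : X, d x y = eVec i)
    (p : (Fin m → ℕ) → (Fin m → ℕ) → (Fin m → ℕ) → ℕ)
    (hp : ∀ a b (x y : X),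
      (Finset.univ.filter fun z => d x z = a ∧ d z y = b).card = p a b (d x y))
    (D : Finset (Fin m → ℕ))
    (hD : ∀ ℓ, ℓ ∈ D ↔ ∃ x y : X, d x y = ℓ) :
    mdistMatrix d 0 = (1 : Matrix X X ℝ) ∧
    (∀ ℓ, (mdistMatrix d ℓ)ᵀ = mdistMatrix d ℓ) ∧
    (∑ ℓ ∈ D, mdistMatrix d ℓ) = Matrix.of (fun _ _ => (1 : ℝ)) ∧
    (∀ a b, mdistMatrix d a * mdistMatrix d b
      = ∑ ℓ ∈ D, (p a b ℓ : ℝ) • mdistMatrix d ℓ) := by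
  classical
  -- zero is minimal
  have hzero : ∀ a, le a 0 → a = 0 := by
    intro a ha
    by_contra hne
    obtain ⟨b, hb, hmin⟩ := hwell {c | ∃ n : ℕ, c = n • a} ⟨a, 1, (one_smul _ _).symm⟩
    obtain ⟨n, rfl⟩ := hb
    have h1 : le ((n + 1) • a) (n • a) := by
      have := hadd a 0 (n • a) ha
      simpa [add_smul, one_smul] using this
    have h2 := hmin _ ⟨n + 1, rfl⟩
    have heq := hantisymm _ _ h2 h1
    have : n • a = n • a + a := by
      conv_lhs => rw [heq]
      rw [add_smul, one_smul]
    exact hne (left_eq_add.mp this)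
  have h0le : ∀ a, le 0 a := by
    intro a
    rcases htotal 0 a with h | h
    · exact h
    · rw [hzero a h]; exact hrefl 0
  have hnilmem : ∀ x : X, (0 : Fin m → ℕ) ∈ walkLengths Γ x x := by
    intro x
    exact ⟨[], CWalk.nil x, by funext i; simp [mlen]⟩
  have hdxx : ∀ x : X, d x x = 0 := by
    intro x
    exact hantisymm _ _ ((hd x x).2 0 (hnilmem x)) (h0le _)
  have hd0 : ∀ x y : X, d x y = 0 → x = y := by
    intro x y h
    obtain ⟨cs, hw, hlen⟩ := (hd x y).1
    rw [h] at hlen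
    have hcs : cs = [] := by
      cases cs with
      | nil => rfl
      | cons i t =>
          have := congrFun hlen i
          simp [mlen] at this
    subst hcs
    cases hw
    rfl
  have hwsymm : ∀ x y : X, walkLengths Γ x y = walkLengths Γ y x := by
    intro x y
    ext ℓ
    constructor <;> rintro ⟨cs, hw, rfl⟩ <;>
      exact ⟨cs.reverse, hw.reverse' hsymmG, by funext i; simp [mlen]⟩
  have hsymd : ∀ x y : X, d x y = d y x := by
    intro x y
    refine hantisymm _ _ ?_ ?_
    · exact (hd x y).2 _ (by rw [hwsymm]; exact (hd y x).1)
    · exact (hd y x).2 _ (by rw [hwsymm]; exact (hd x y).1)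
  have hmemD : ∀ x y : X, d x y ∈ D := fun x y => (hD _).2 ⟨x, y, rfl⟩
  refine ⟨?_, ?_, ?_, ?_⟩
  · ext x y
    by_cases h : x = y
    · subst h
      simp [mdistMatrix, hdxx, Matrix.one_apply]
    · have : d x y ≠ 0 := fun hc => h (hd0 _ _ hc)
      simp [mdistMatrix, this, Matrix.one_apply, h]
  · intro ℓ
    ext x y
    simp [mdistMatrix, Matrix.transpose_apply, hsymd x y]
  · ext x y
    simp only [Matrix.sum_apply, mdistMatrix, Matrix.of_apply]
    rw [Finset.sum_ite_eq D (d x y) (fun _ => (1 : ℝ))]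
    simp [hmemD x y]
  · intro a b
    ext x y
    have hL : (mdistMatrix d a * mdistMatrix d b) x y = (p a b (d x y) : ℝ) := by
      rw [Matrix.mul_apply]
      have : ∀ z, mdistMatrix d a x z * mdistMatrix d b z y
          = if d x z = a ∧ d z y = b then (1 : ℝ) else 0 := by
        intro z
        simp only [mdistMatrix, Matrix.of_apply, ite_and, ite_mul, mul_ite, one_mul,
          mul_one, zero_mul, mul_zero]
        split_ifs <;> rfl
      simp_rw [this]
      rw [Finset.sum_boole, ← hp a b x y]
    rw [hL]
    simp only [Matrix.sum_apply, Matrix.smul_apply, mdistMatrix, Matrix.of_apply,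
      smul_eq_mul, mul_ite, mul_one, mul_zero]
    rw [Finset.sum_ite_eq D (d x y) (fun ℓ => (p a b ℓ : ℝ))]
    simp [hmemD x y]
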